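/- For all natural numbers n ≥ k ≥ 1, one has (2√π)^k · Γ(k(2n−k)/2 + 1) ≥ ∏_{i=n−k+1}^{n} Γ(i). Equivalently, the total volume of the complex Stiefel manifold, vol V_{k,n} = ∏_{i=n−k+1}^{n} 2π^i/(i−1)!, is at least the volume |B^D| = π^{D/2}/Γ(D/2+1) of the unit ball in ℝ^D with D = k(2n−k), i.e. vol V_{k,n}/|B^{k(2n−k)}| ≥ 1. -/

import Mathlib

open Real Finset

lemma gamma_superadd {x y : ℝ} (hx : 0 ≤ x) (hy : 0 ≤ y) :
    Real.Gamma (1 + x) * Real.Gamma (1 + y) ≤ Real.Gamma (1 + x + y) := by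
  rcases hx.eq_or_lt with rfl | hx
  · simp
  rcases hy.eq_or_lt with rfl | hy
  · simp
  have hxy : 0 < x + y := by linarith
  set t := y / (x + y) with ht
  have ht0 : 0 ≤ t := by positivity
  have ht1 : 0 ≤ 1 - t := by
    rw [sub_nonneg, ht]
    exact div_le_one_of_le₀ (by linarith) hxy.le
  have hb : (1 : ℝ) + x + y ∈ Set.Ioi (0:ℝ) := Set.mem_Ioi.2 (by linarith)
  have ha : (1 : ℝ) ∈ Set.Ioi (0:ℝ) := Set.mem_Ioi.2 one_pos
  have e1 : t • (1:ℝ) + (1 - t) • ((1:ℝ) + x + y) = 1 + x := by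
    field_simp [ht]
    have htxy : t * (x+y) = y := by rw [ht]; exact div_mul_cancel₀ y hxy.ne'
    linear_combination (-1:ℝ) * htxy
  have e2 : (1 - t) • (1:ℝ) + t • ((1:ℝ) + x + y) = 1 + y := by
    field_simp [ht]
    have htxy : t * (x+y) = y := by rw [ht]; exact div_mul_cancel₀ y hxy.ne'
    linear_combination htxy
  have c1 := Real.convexOn_log_Gamma.2 ha hb ht0 ht1 (by ring)
  have c2 := Real.convexOn_log_Gamma.2 ha hb ht1 ht0 (by ring)
  rw [e1] at c1
  rw [e2] at c2
  have hpos1 : 0 < Real.Gamma (1+x) := Real.Gamma_pos_of_pos (by linarith)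
  have hpos2 : 0 < Real.Gamma (1+y) := Real.Gamma_pos_of_pos (by linarith)
  have hpos3 : 0 < Real.Gamma (1+x+y) := Real.Gamma_pos_of_pos (by linarith)
  have hineq : Real.log (Real.Gamma (1+x)) + Real.log (Real.Gamma (1+y)) ≤
      Real.log (Real.Gamma (1+x+y)) := by
    simp only [Function.comp_apply, smul_eq_mul, Real.Gamma_one, Real.log_one, mul_zero,
      zero_add] at c1 c2
    have hr : (1 - t) * Real.log (Real.Gamma (1+x+y)) + t * Real.log (Real.Gamma (1+x+y))
        = Real.log (Real.Gamma (1+x+y)) := by ring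
    linarith
  rw [← Real.exp_log (mul_pos hpos1 hpos2), ← Real.exp_log hpos3, Real.exp_le_exp,
    Real.log_mul hpos1.ne' hpos2.ne']
  exact hineq

lemma prod_gamma_le (s : Finset ℕ) (f : ℕ → ℝ) (hf : ∀ i ∈ s, 0 ≤ f i) :
    ∏ i ∈ s, Real.Gamma (1 + f i) ≤ Real.Gamma (1 + ∑ i ∈ s, f i) := by
  classical
  induction s using Finset.induction_on with
  | empty => simp
  | @insert a s ha ih =>
    rw [Finset.prod_insert ha, Finset.sum_insert ha]
    have hfa : 0 ≤ f a := hf a (Finset.mem_insert_self a s)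
    have hfs : ∀ i ∈ s, 0 ≤ f i := fun i hi => hf i (Finset.mem_insert_of_mem hi)
    have hsum : 0 ≤ ∑ i ∈ s, f i := Finset.sum_nonneg hfs
    calc Real.Gamma (1 + f a) * ∏ i ∈ s, Real.Gamma (1 + f i)
        ≤ Real.Gamma (1 + f a) * Real.Gamma (1 + ∑ i ∈ s, f i) := by
          exact mul_le_mul_of_nonneg_left (ih hfs) (Real.Gamma_pos_of_pos (by linarith)).le
      _ ≤ Real.Gamma (1 + f a + ∑ i ∈ s, f i) := gamma_superadd hfa hsum
      _ = Real.Gamma (1 + (f a + ∑ i ∈ s, f i)) := by rw [add_assoc]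

lemma sumIcc (m k : ℕ) : (∑ i ∈ Finset.Icc (m+1) (m+k), (i:ℝ)) * 2 = k*(2*m+k)+k := by
  induction k with
  | zero => simp
  | succ k ih =>
    rw [show m + (k+1) = (m+k) + 1 by ring, Finset.sum_Icc_succ_top (by omega)]
    push_cast
    push_cast at ih
    linear_combination ih

theorem stiefel_volume_ge_ball (n k : ℕ) (hk : 1 ≤ k) (hkn : k ≤ n) :
    (2 * Real.sqrt π) ^ k *
        Real.Gamma (((k : ℝ) * (2 * (n : ℝ) - (k : ℝ))) / 2 + 1) ≥
      ∏ i ∈ Finset.Icc (n - k + 1) n, Real.Gamma (i : ℝ) ∧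
    (∏ i ∈ Finset.Icc (n - k + 1) n, 2 * π ^ (i : ℕ) / (Nat.factorial (i - 1) : ℝ)) /
        (π ^ (((k * (2 * n - k) : ℕ) : ℝ) / 2) /
          Real.Gamma (((k * (2 * n - k) : ℕ) : ℝ) / 2 + 1)) ≥ 1 := by
  obtain ⟨m, rfl⟩ : ∃ m, n = m + k := ⟨n - k, by omega⟩
  rw [Nat.add_sub_cancel]
  set s : Finset ℕ := Finset.Icc (m+1) (m+k) with hs
  set d : ℝ := (k:ℝ) * (2*(m:ℝ)+(k:ℝ)) / 2 with hd
  have hcard : s.card = k := by rw [hs, Nat.card_Icc]; omega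
  have hmem : ∀ i ∈ s, 1 ≤ i := by intro i hi; rw [hs, Finset.mem_Icc] at hi; omega
  have hP : 0 < ∏ i ∈ s, Real.Gamma (i:ℝ) := by
    apply Finset.prod_pos
    intro i hi
    exact Real.Gamma_pos_of_pos (by exact_mod_cast Nat.lt_of_lt_of_le Nat.zero_lt_one (hmem i hi))
  -- sum computation
  have hsumS : (∑ i ∈ s, (i:ℝ)) * 2 = (k:ℝ)*(2*(m:ℝ)+(k:ℝ)) + k := sumIcc m k
  have hsum1 : ∑ i ∈ s, ((i:ℝ) - 1) = d - (k:ℝ)/2 := by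
    rw [Finset.sum_sub_distrib, Finset.sum_const, hcard, nsmul_eq_mul, mul_one]
    rw [hd]; linarith
  have hX : 0 ≤ d - (k:ℝ)/2 := by
    rw [← hsum1]
    apply Finset.sum_nonneg
    intro i hi
    have h1i : (1:ℝ) ≤ (i:ℝ) := by exact_mod_cast hmem i hi
    show (0:ℝ) ≤ (i:ℝ) - 1
    linarith
  -- step 1 : product of Gammas ≤ Gamma (1 + sum)
  have h1 : ∏ i ∈ s, Real.Gamma (i:ℝ) ≤ Real.Gamma (1 + (d - (k:ℝ)/2)) := by
    rw [← hsum1]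
    have := prod_gamma_le s (fun i => (i:ℝ) - 1) ?_
    · refine le_trans (le_of_eq ?_) this
      apply Finset.prod_congr rfl
      intro i _
      congr 1
      ring
    · intro i hi
      have : (1:ℝ) ≤ (i:ℝ) := by exact_mod_cast hmem i hi
      show (0:ℝ) ≤ (i:ℝ) - 1
      linarith
  -- step 2 : superadditivity
  have h2 : Real.Gamma (1 + (d - (k:ℝ)/2)) * Real.Gamma (1 + (k:ℝ)/2) ≤
      Real.Gamma (d + 1) := by
    have := gamma_superadd hX (by positivity : (0:ℝ) ≤ (k:ℝ)/2)
    calc Real.Gamma (1 + (d - (k:ℝ)/2)) * Real.Gamma (1 + (k:ℝ)/2)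
        ≤ Real.Gamma (1 + (d - (k:ℝ)/2) + (k:ℝ)/2) := this
      _ = Real.Gamma (d + 1) := by congr 1; ring
  -- step 3 : lower bound for Gamma (1 + k/2)
  have hg32 : Real.Gamma (1 + (1:ℝ)/2) = Real.sqrt π / 2 := by
    rw [add_comm, Real.Gamma_add_one (by norm_num), Real.Gamma_one_half_eq]
    ring
  have h3 : (Real.sqrt π / 2) ^ k ≤ Real.Gamma (1 + (k:ℝ)/2) := by
    have h := prod_gamma_le (Finset.range k) (fun _ => (1:ℝ)/2) (fun i _ => by norm_num)
    rw [Finset.prod_const, Finset.sum_const, Finset.card_range, hg32, nsmul_eq_mul] at h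
    have he : (1:ℝ) + (k:ℝ) * (1/2) = 1 + (k:ℝ)/2 := by ring
    rwa [he] at h
  have hsqpos : 0 < Real.sqrt π / 2 := by positivity
  have hGd : 0 < Real.Gamma (d + 1) := Real.Gamma_pos_of_pos (by linarith)
  have hGX : 0 < Real.Gamma (1 + (d - (k:ℝ)/2)) := Real.Gamma_pos_of_pos (by linarith)
  -- key inequality
  have key : ∏ i ∈ s, Real.Gamma (i:ℝ) ≤ (2 * Real.sqrt π) ^ k * Real.Gamma (d + 1) := by
    have step : (∏ i ∈ s, Real.Gamma (i:ℝ)) * (Real.sqrt π / 2) ^ k ≤ Real.Gamma (d + 1) :=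
      le_trans (mul_le_mul h1 h3 (by positivity) hGX.le) h2
    have hpik : (1:ℝ) ≤ π ^ k := one_le_pow₀ (by linarith [Real.pi_gt_three] : (1:ℝ) ≤ π)
    have hmulpow : (Real.sqrt π / 2) ^ k * (2 * Real.sqrt π) ^ k = π ^ k := by
      rw [← mul_pow]
      congr 1
      rw [div_mul_eq_mul_div, mul_comm (2:ℝ) (Real.sqrt π), ← mul_assoc,
        Real.mul_self_sqrt Real.pi_pos.le]
      ring
    calc ∏ i ∈ s, Real.Gamma (i:ℝ)
        ≤ (∏ i ∈ s, Real.Gamma (i:ℝ)) * π ^ k := le_mul_of_one_le_right hP.le hpik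
      _ = (∏ i ∈ s, Real.Gamma (i:ℝ)) * (Real.sqrt π / 2) ^ k * (2 * Real.sqrt π) ^ k := by
          rw [mul_assoc, hmulpow]
      _ ≤ Real.Gamma (d + 1) * (2 * Real.sqrt π) ^ k := by
          apply mul_le_mul_of_nonneg_right step (by positivity)
      _ = (2 * Real.sqrt π) ^ k * Real.Gamma (d + 1) := mul_comm _ _
  have hdarg : ((k : ℝ) * (2 * ((m:ℝ)+(k:ℝ)) - (k : ℝ))) / 2 = d := by rw [hd]; ring
  have hDcast : ((k * (2 * (m+k) - k) : ℕ) : ℝ) = 2 * d := by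
    rw [show 2 * (m+k) - k = 2*m+k by omega]
    push_cast
    rw [hd]; ring
  constructor
  · push_cast
    rw [hdarg]
    exact key
  · -- second conjunct
    rw [hDcast, show (2*d)/2 = d by ring]
    have hfact : ∀ i ∈ s, (2:ℝ) * π ^ i / ((i-1).factorial : ℝ) =
        2 * π ^ i / Real.Gamma (i:ℝ) := by
      intro i hi
      congr 1
      rw [← Real.Gamma_nat_eq_factorial (i-1)]
      congr 1
      have h1i := hmem i hi
      push_cast [Nat.cast_sub h1i]
      ring
    rw [Finset.prod_congr rfl hfact, Finset.prod_div_distrib, Finset.prod_mul_distrib,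
      Finset.prod_const, hcard, Finset.prod_pow_eq_pow_sum]
    set S : ℕ := ∑ i ∈ s, i with hS
    have hScast : (S:ℝ) = d + (k:ℝ)/2 := by
      have : (S:ℝ) = ∑ i ∈ s, (i:ℝ) := by rw [hS]; push_cast; rfl
      linarith [hsumS, this.symm.le]
    have hpd : (0:ℝ) < π ^ d := Real.rpow_pos_of_pos Real.pi_pos d
    rw [ge_iff_le, le_div_iff₀ (by positivity), one_mul,
      div_le_div_iff₀ (by positivity) (by positivity)]
    -- goal : π ^ d * ∏ Γ ≤ 2^k * π^S * Γ(d+1)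
    have heq : π ^ d * ((2 * Real.sqrt π) ^ k * Real.Gamma (d+1)) =
        (2:ℝ)^k * π^S * Real.Gamma (d+1) := by
      rw [mul_pow]
      have hsq : (Real.sqrt π) ^ k = π ^ ((k:ℝ)/2) := by
        rw [Real.sqrt_eq_rpow, ← Real.rpow_natCast (π ^ ((1:ℝ)/2)) k,
          ← Real.rpow_mul Real.pi_pos.le]
        congr 1
        ring
      rw [hsq, ← Real.rpow_natCast π S, hScast, Real.rpow_add Real.pi_pos d ((k:ℝ)/2)]
      ring
    calc π ^ d * ∏ i ∈ s, Real.Gamma (i:ℝ)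
        ≤ π ^ d * ((2 * Real.sqrt π) ^ k * Real.Gamma (d+1)) :=
          mul_le_mul_of_nonneg_left key hpd.le
      _ = (2:ℝ)^k * π^S * Real.Gamma (d+1) := heq
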